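/- Let G act properly and continuously on a locally compact Hausdorff space M (i.e., the map G × M → M × M, (x,m) ↦ (x•m, m), is proper), and suppose the orbit space M/G with the quotient topology is paracompact. Then there exists a continuous function h : M → ℝ with h(m) > 0 for every m ∈ M such that h(x⁻¹•m) = Δ(x)·h(m) for all x ∈ G and m ∈ M. -/

import Mathlib

open MeasureTheory Set Function

/-- If `G` acts properly and continuously on a locally compact Hausdorff
space `M` with paracompact orbit space, then there is a continuous strictly positive
function `h : M → ℝ` with `h(x⁻¹ • m) = Δ(x) h(m)` for all `x ∈ G`, `m ∈ M`, where `Δ` is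
the modular function of `G`. -/
theorem stmt14
    {G : Type*} [Group G] [TopologicalSpace G] [IsTopologicalGroup G]
    [LocallyCompactSpace G] [MeasurableSpace G] [BorelSpace G]
    (μ : Measure G) [μ.IsHaarMeasure]
    (Δ : G → ℝ) (hΔpos : ∀ y, 0 < Δ y) (hΔcont : Continuous Δ)
    (hΔhom : ∀ x y : G, Δ (x * y) = Δ x * Δ y)
    (hΔ : ∀ (y : G) (f : G → ℝ), Integrable f μ →
      ∫ x, f (x * y) ∂μ = (Δ y)⁻¹ * ∫ x, f x ∂μ)
    {M : Type*} [TopologicalSpace M] [LocallyCompactSpace M] [T2Space M]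
    [MulAction G M] [ContinuousSMul G M]
    (hproper : ∀ K : Set (M × M), IsCompact K →
      IsCompact ((fun p : G × M => (p.1 • p.2, p.2)) ⁻¹' K))
    (hpara : ParacompactSpace (Quotient (MulAction.orbitRel G M))) :
    ∃ h : M → ℝ, Continuous h ∧ (∀ m : M, 0 < h m) ∧
      ∀ (x : G) (m : M), h (x⁻¹ • m) = Δ x * h m := by
  classical
  haveI := hpara
  -- the quotient map
  set π : M → Quotient (MulAction.orbitRel G M) := Quotient.mk (MulAction.orbitRel G M) with hπ
  have hπcont : Continuous π := continuous_quot_mk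
  have hπopen : IsOpenMap π := MulAction.isOpenQuotientMap_quotientMk.isOpenMap
  have hπsmul : ∀ (x : G) (m : M), π (x • m) = π m := fun x m =>
    Quotient.sound ((MulAction.orbitRel_apply).2 (MulAction.mem_orbit m x))
  -- the action is proper, hence the quotient is T2, hence T4 (paracompact)
  haveI : ProperSMul G M :=
    ⟨(isProperMap_iff_isCompact_preimage).2
      ⟨(continuous_smul.comp continuous_id).prodMk continuous_snd, hproper⟩⟩
  haveI : T2Space (Quotient (MulAction.orbitRel G M)) :=
    t2Space_quotient_mulAction_of_properSMul
  -- bump functions on `M`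
  have hg : ∀ m₀ : M, ∃ g : C(M, ℝ), Set.EqOn g 1 {m₀} ∧ Set.EqOn g 0 (∅ : Set M) ∧
      HasCompactSupport g ∧ ∀ x, g x ∈ Set.Icc (0 : ℝ) 1 := fun m₀ =>
    exists_continuous_one_zero_of_isCompact isCompact_singleton isClosed_empty (by simp)
  choose g hg1 _ hgc hg01 using hg
  have hgnn : ∀ i n, 0 ≤ g i n := fun i n => (hg01 i n).1
  -- the open cover of the quotient by images of the supports
  set U : M → Set (Quotient (MulAction.orbitRel G M)) := fun i => π '' support (g i) with hU
  have hUopen : ∀ i, IsOpen (U i) := fun i =>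
    hπopen _ ((isOpen_compl_singleton (x := (0:ℝ))).preimage (g i).continuous)
  have hUcover : (univ : Set (Quotient (MulAction.orbitRel G M))) ⊆ ⋃ i, U i := by
    intro q _
    obtain ⟨n, rfl⟩ := Quotient.exists_rep q
    have hone : (g n) n = 1 := hg1 n rfl
    exact mem_iUnion.2 ⟨n, ⟨n, by simp [mem_support, hone], rfl⟩⟩
  -- partition of unity on the quotient subordinate to this cover
  obtain ⟨φ, hφsub⟩ := PartitionOfUnity.exists_isSubordinate isClosed_univ U hUopen hUcover
  -- uniform compactness of "return sets"
  have key : ∀ (i : M) (L : Set M), IsCompact L → ∃ C : Set G, IsCompact C ∧ IsClosed C ∧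
      ∀ m ∈ L, ∀ x : G, x ∉ C → g i (x • m) = 0 := by
    intro i L hL
    set C0 := Prod.fst '' ((fun p : G × M => (p.1 • p.2, p.2)) ⁻¹' ((tsupport (g i)) ×ˢ L))
    have hC0 : IsCompact C0 := (hproper _ ((hgc i).prod hL)).image continuous_fst
    refine ⟨closure C0, hC0.closure, isClosed_closure, fun m hm x hx => ?_⟩
    by_contra hne
    exact hx (subset_closure ⟨⟨x, m⟩, ⟨subset_closure hne, hm⟩, rfl⟩)
  -- each `x ↦ g i (x • m)` is continuous and integrable
  have hcontg : ∀ (i m : M), Continuous fun x : G => g i (x • m) := fun i m =>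
    (g i).continuous.comp (continuous_id.smul continuous_const)
  have hInt : ∀ (i m : M), Integrable (fun x => g i (x • m)) μ := by
    intro i m
    obtain ⟨C, hCcomp, hCcl, hC⟩ := key i {m} isCompact_singleton
    exact (hcontg i m).integrable_of_hasCompactSupport
      (HasCompactSupport.intro' hCcomp hCcl fun x hx => hC m rfl x hx)
  -- the auxiliary functions `H i m = ∫ g i (x • m)` and their continuity
  set H : M → M → ℝ := fun i m => ∫ x, g i (x • m) ∂μ with hH
  have hHcont : ∀ i : M, Continuous (H i) := by
    intro i
    rw [continuous_iff_continuousAt]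
    intro m₀
    obtain ⟨K, hKcomp, hKmem⟩ := exists_compact_mem_nhds m₀
    obtain ⟨C, hCcomp, hCcl, hC⟩ := key i K hKcomp
    have hco : ContinuousOn (fun m => ∫ x, g i (x • m) ∂μ) K := by
      apply continuousOn_integral_of_compact_support hCcomp
      · exact ((g i).continuous.comp (continuous_snd.smul continuous_fst)).continuousOn
      · exact fun m x hm hx => hC m hm x hx
    exact hco.continuousAt hKmem
  -- point-finiteness
  set T : M → Finset M := fun m => (φ.locallyFinite.point_finite (π m)).toFinset with hT
  have hmemT : ∀ m i, i ∈ T m ↔ π m ∈ support (φ i) := fun m i => Set.Finite.mem_toFinset _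
  -- the integrand
  set f : M → G → ℝ := fun m x => ∑ᶠ i, φ i (π m) * g i (x • m) with hf
  have hfsum : ∀ m x, f m x = ∑ i ∈ T m, φ i (π m) * g i (x • m) := by
    intro m x
    refine finsum_eq_sum_of_support_subset _ fun i hi => ?_
    exact Finset.mem_coe.2 ((hmemT m i).2 (by
      simpa [mem_support] using left_ne_zero_of_mul hi))
  have hfnn : ∀ m x, 0 ≤ f m x := by
    intro m x
    rw [hfsum]
    exact Finset.sum_nonneg fun i _ => mul_nonneg (φ.nonneg i _) (hgnn i _)
  have hfInt : ∀ m, Integrable (f m) μ := by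
    intro m
    have : f m = fun x => ∑ i ∈ T m, φ i (π m) * g i (x • m) := funext fun x => hfsum m x
    rw [this]
    exact integrable_finset_sum _ fun i _ => (hInt i m).const_mul _
  -- the function `h`
  refine ⟨fun m => ∫ x, f m x ∂μ, ?_, ?_, ?_⟩
  · -- continuity
    have hrep : ∀ m, ∫ x, f m x ∂μ = ∑ᶠ i, φ i (π m) * H i m := by
      intro m
      have : ∫ x, f m x ∂μ = ∑ i ∈ T m, φ i (π m) * H i m := by
        simp only [hfsum]
        rw [integral_finset_sum _ fun i _ => (hInt i m).const_mul _]
        exact Finset.sum_congr rfl fun i _ => integral_const_mul _ _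
      rw [this]
      refine (finsum_eq_sum_of_support_subset _ fun i hi => ?_).symm
      exact Finset.mem_coe.2 ((hmemT m i).2 (by
        simpa [mem_support] using left_ne_zero_of_mul hi))
    have : (fun m => ∫ x, f m x ∂μ) = fun m => ∑ᶠ i, φ i (π m) * H i m :=
      funext hrep
    rw [this]
    refine continuous_finsum
      (fun i => (((φ i).continuous.comp hπcont)).mul (hHcont i)) ?_
    refine (φ.locallyFinite.preimage_continuous hπcont).subset fun i => ?_
    intro m hm
    simpa [mem_support] using left_ne_zero_of_mul hm
  · -- positivity
    intro m
    have hsum1 : ∑ᶠ i, φ i (π m) = 1 := φ.sum_eq_one (mem_univ _)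
    have : ∃ i₀, φ i₀ (π m) ≠ 0 := by
      by_contra hno
      push_neg at hno
      rw [finsum_congr (fun i => hno i), finsum_zero] at hsum1
      norm_num at hsum1
    obtain ⟨i₀, hi₀⟩ := this
    have hi₀pos : 0 < φ i₀ (π m) := lt_of_le_of_ne (φ.nonneg i₀ _) (Ne.symm hi₀)
    have : π m ∈ U i₀ := hφsub i₀ (subset_tsupport _ (by simpa [support] using hi₀))
    obtain ⟨n, hn, hnm⟩ := this
    obtain ⟨c, rfl⟩ : ∃ c : G, c • m = n :=
      MulAction.mem_orbit_iff.1 ((MulAction.orbitRel_apply).1 (Quotient.exact hnm))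
    have hfc : 0 < f m c := by
      rw [hfsum]
      refine Finset.sum_pos' (fun i _ => mul_nonneg (φ.nonneg i _) (hgnn i _)) ⟨i₀, ?_, ?_⟩
      · rw [hmemT]; simpa [support] using hi₀
      · exact mul_pos hi₀pos (lt_of_le_of_ne (hgnn i₀ _) (Ne.symm hn))
    rw [integral_pos_iff_support_of_nonneg (fun x => hfnn m x) (hfInt m)]
    have hctsf : Continuous (f m) := by
      have : f m = fun x => ∑ i ∈ T m, φ i (π m) * g i (x • m) := funext fun x => hfsum m x
      rw [this]
      exact continuous_finset_sum _ fun i _ => continuous_const.mul (hcontg i m)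
    have hopen : IsOpen (support (f m)) :=
      (isOpen_compl_singleton (x := (0:ℝ))).preimage hctsf
    exact hopen.measure_pos μ ⟨c, ne_of_gt hfc⟩
  · -- equivariance
    intro y m
    have hΔ1 : Δ 1 = 1 := by
      have h := hΔhom 1 1
      rw [mul_one] at h
      exact (mul_left_cancel₀ (hΔpos 1).ne' (by rw [mul_one, ← h])).symm
    have hΔinv : Δ y⁻¹ = (Δ y)⁻¹ := by
      have h := hΔhom y⁻¹ y
      rw [inv_mul_cancel, hΔ1] at h
      exact eq_inv_of_mul_eq_one_left h.symm
    have hshift : ∀ x : G, f (y⁻¹ • m) x = f m (x * y⁻¹) := by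
      intro x
      simp only [hf]
      refine finsum_congr fun i => ?_
      rw [hπsmul, smul_smul]
    calc ∫ x, f (y⁻¹ • m) x ∂μ = ∫ x, f m (x * y⁻¹) ∂μ := by
          exact integral_congr_ae (.of_forall hshift)
      _ = (Δ y⁻¹)⁻¹ * ∫ x, f m x ∂μ := hΔ y⁻¹ (f m) (hfInt m)
      _ = Δ y * ∫ x, f m x ∂μ := by rw [hΔinv, inv_inv]
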